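/- arXiv:1112.2449 — 2 statements merged into one kernel-verified Lean document; each statement's English description precedes it below -/
import Mathlib

section
/- Let ω = e^{iπ/3} ∈ ℂ. If p is a polynomial with integer coefficients such that p(ω) = -1, then p(-1) ≡ -1 (mod 3), i.e. 3 divides p(-1) + 1. -/
open Polynomial Complex

theorem stmt_0 (p : Polynomial ℤ)
    (h : Polynomial.aeval (Complex.exp (Real.pi * Complex.I / 3)) p = -1) :
    (3 : ℤ) ∣ p.eval (-1) + 1 := by
  set ω : ℂ := Complex.exp (Real.pi * Complex.I / 3) with hω
  have hω' : ω = Complex.exp ((Real.pi/3 : ℝ) * Complex.I) := by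
    rw [hω]; push_cast; ring_nf
  have hre : ω.re = Real.cos (Real.pi/3) := by rw [hω', Complex.exp_ofReal_mul_I_re]
  have him : ω.im = Real.sin (Real.pi/3) := by rw [hω', Complex.exp_ofReal_mul_I_im]
  have himne : ω.im ≠ 0 := by
    rw [him]
    have := Real.sin_pos_of_pos_of_lt_pi (x := Real.pi/3)
      (by positivity) (by linarith [Real.pi_pos])
    linarith
  have hω3 : ω^3 = -1 := by
    rw [hω, ← Complex.exp_nat_mul]
    have : (3:ℕ) * (↑Real.pi * Complex.I / 3) = ↑Real.pi * Complex.I := by push_cast; ring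
    rw [this, Complex.exp_pi_mul_I]
  have hωne : ω ≠ -1 := by
    intro hc
    apply himne
    rw [hc]; simp
  have hquad : ω^2 - ω + 1 = 0 := by
    have h1 : (ω + 1) * (ω^2 - ω + 1) = 0 := by ring_nf; linear_combination hω3
    rcases mul_eq_zero.mp h1 with h2 | h2
    · exact absurd (eq_neg_of_add_eq_zero_left h2) hωne
    · exact h2
  -- division with remainder
  set q := p /ₘ (X^2 - X + 1 : Polynomial ℤ) with hq
  set r := p %ₘ (X^2 - X + 1 : Polynomial ℤ) with hr
  have hmonic : (X^2 - X + 1 : Polynomial ℤ).Monic := by monicity!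
  have hdeg2 : (X^2 - X + 1 : Polynomial ℤ).degree = 2 := by compute_degree!
  have hP : p = (X^2 - X + 1) * q + r := by
    conv_lhs => rw [← modByMonic_add_div p (X^2 - X + 1 : Polynomial ℤ)]
    ring
  have hrdeg : r.degree < 2 := hdeg2 ▸ degree_modByMonic_lt p hmonic
  have hrnat : r.natDegree ≤ 1 := by
    rcases eq_or_ne r 0 with h0 | h0
    · simp [h0]
    · have := (degree_eq_natDegree h0) ▸ hrdeg
      exact_mod_cast Nat.lt_succ_iff.mp (by exact_mod_cast this)
  have hrC : r = C (r.coeff 0) + C (r.coeff 1) * X := by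
    have h1 := r.eq_X_add_C_of_natDegree_le_one hrnat
    conv_lhs => rw [h1]
    ring
  -- evaluate at ω
  have heval : (r.coeff 1 : ℂ) * ω + (r.coeff 0 : ℂ) = -1 := by
    have := h
    rw [hP] at this
    simp only [map_add, map_mul, map_pow, map_one, aeval_X, map_sub] at this
    rw [show ((ω^2 - ω + 1) : ℂ) = 0 from hquad] at this
    rw [hrC] at this
    simp only [map_add, map_mul, aeval_X, aeval_C] at this
    simp only [algebraMap_int_eq, eq_intCast] at this
    linear_combination this
  have ha : (r.coeff 1 : ℝ) * ω.im = 0 := by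
    have := congrArg Complex.im heval
    simpa using this
  have ha0 : r.coeff 1 = 0 := by
    have : (r.coeff 1 : ℝ) = 0 := by
      rcases mul_eq_zero.mp ha with h' | h'
      · exact h'
      · exact absurd h' himne
    exact_mod_cast this
  have hb : r.coeff 0 = -1 := by
    have := congrArg Complex.re heval
    rw [ha0] at this
    simp at this
    exact_mod_cast this
  -- evaluate at -1
  have : p.eval (-1) = 3 * q.eval (-1) + (-1) := by
    rw [hP]
    simp only [eval_add, eval_mul, eval_pow, eval_sub, eval_X, eval_one]
    rw [hrC, ha0, hb]
    simp
  rw [this]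
  exact ⟨q.eval (-1), by ring⟩
end

section
/- Let ω = e^{iπ/3} ∈ ℂ. There is no polynomial p with integer coefficients and integer m with 3 ∤ m such that p(ω) = -1 and p(-1) = m². -/
open Polynomial Complex

noncomputable def ω : ℂ := Complex.exp (Real.pi * Complex.I / 3)

lemma omega_eq : ω = Complex.exp ((Real.pi / 3 : ℝ) * Complex.I) := by
  unfold ω; push_cast; ring_nf

lemma omega_re : ω.re = 1 / 2 := by
  rw [omega_eq, Complex.exp_ofReal_mul_I_re, Real.cos_pi_div_three]

lemma omega_im : ω.im = Real.sqrt 3 / 2 := by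
  rw [omega_eq, Complex.exp_ofReal_mul_I_im, Real.sin_pi_div_three]

lemma omega_cube : ω ^ 3 = -1 := by
  rw [omega_eq, ← Complex.exp_nat_mul]
  rw [show ((3:ℕ):ℂ) * ((Real.pi / 3 : ℝ) * Complex.I) = Real.pi * Complex.I by
    push_cast; ring]
  exact Complex.exp_pi_mul_I

lemma omega_root : ω ^ 2 - ω + 1 = 0 := by
  have h3 := omega_cube
  have hne : ω + 1 ≠ 0 := by
    intro h
    have h' : ω.re + 1 = 0 := by
      have := congrArg Complex.re h
      simpa using this
    rw [omega_re] at h'; norm_num at h'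
  have hz : (ω + 1) * (ω ^ 2 - ω + 1) = 0 := by linear_combination h3
  rcases mul_eq_zero.mp hz with h | h
  · exact absurd h hne
  · exact h

lemma degree_le_one_of_lt_two {d : WithBot ℕ} (h : d < 2) : d ≤ 1 := by
  have h2 : d < ((2:ℕ) : WithBot ℕ) := by simpa using h
  rcases d with _ | n
  · exact bot_le
  · have : n < 2 := WithBot.coe_lt_coe.mp h2
    exact WithBot.coe_le_coe.mpr (by omega)

theorem stmt_2 :
    ¬ ∃ (p : Polynomial ℤ) (m : ℤ), ¬ (3 : ℤ) ∣ m ∧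
      Polynomial.aeval (Complex.exp (Real.pi * Complex.I / 3)) p = -1 ∧
      p.eval (-1) = m ^ 2 := by
  rintro ⟨p, m, hm, hω, hev⟩
  set g : Polynomial ℤ := X ^ 2 - X + 1 with hg
  have hdeg2 : g.degree = 2 := by rw [hg]; compute_degree!
  have hmon : g.Monic := by
    have hnd : g.natDegree = 2 := by rw [hg]; compute_degree!
    unfold Polynomial.Monic Polynomial.leadingCoeff
    rw [hnd, hg]; simp [coeff_one, coeff_X]
  have hq := (Polynomial.modByMonic_add_div (p + 1) g).symm
  set r := (p + 1) %ₘ g with hr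
  have hdeg : r.degree ≤ 1 := by
    apply degree_le_one_of_lt_two
    have := Polynomial.degree_modByMonic_lt (p + 1) hmon
    rwa [hdeg2] at this
  have hrform : r = C (r.coeff 1) * X + C (r.coeff 0) :=
    Polynomial.eq_X_add_C_of_degree_le_one hdeg
  have hgω : Polynomial.aeval ω g = 0 := by
    rw [hg]
    simp only [map_add, map_sub, map_pow, Polynomial.aeval_X, map_one]
    linear_combination omega_root
  have hpω : Polynomial.aeval ω (p + 1) = 0 := by
    have h1 : Polynomial.aeval ω p = -1 := hω
    rw [map_add, h1, map_one]; ring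
  have hrω : Polynomial.aeval ω r = 0 := by
    rw [← hpω, hq, map_add, map_mul, hgω, zero_mul, add_zero]
  rw [hrform] at hrω
  simp only [map_add, map_mul, Polynomial.aeval_X, Polynomial.aeval_C,
    eq_intCast] at hrω
  set a : ℤ := r.coeff 0
  set b : ℤ := r.coeff 1
  have him : (b : ℝ) * ω.im = 0 := by
    have := congrArg Complex.im hrω
    simpa [Complex.add_im, Complex.mul_im] using this
  have hb : b = 0 := by
    have hbr : (b : ℝ) = 0 := by
      rcases mul_eq_zero.mp him with h | h
      · exact h
      · exfalso
        rw [omega_im] at h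
        have h3 : Real.sqrt 3 > 0 := Real.sqrt_pos.mpr (by norm_num)
        linarith
    exact_mod_cast hbr
  have ha : a = 0 := by
    rw [hb] at hrω
    have : (a : ℂ) = 0 := by simpa using hrω
    exact_mod_cast this
  have hr0 : r = 0 := by rw [hrform, ha, hb]; simp
  have hev1 := congrArg (Polynomial.eval (-1 : ℤ)) hq
  rw [hr0] at hev1
  simp [Polynomial.eval_add, Polynomial.eval_mul, hg] at hev1
  have h3dvd : (3 : ℤ) ∣ m ^ 2 + 1 := by
    rw [← hev]
    exact ⟨((p + 1) /ₘ g).eval (-1), by linarith [hev1]⟩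
  have h1 : ((m : ZMod 3)) ^ 2 + 1 = 0 := by
    have := (ZMod.intCast_zmod_eq_zero_iff_dvd (m ^ 2 + 1) 3).mpr h3dvd
    push_cast at this; exact this
  have h2 : (m : ZMod 3) ≠ 0 := fun h =>
    hm ((ZMod.intCast_zmod_eq_zero_iff_dvd m 3).mp h)
  have : ∀ x : ZMod 3, x ^ 2 + 1 = 0 → x ≠ 0 → False := by decide
  exact this _ h1 h2
end
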